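/- Let A ⊂ ℤ be a g1-difference set for [N] of size k, and let C ⊆ ℤ/qℤ be a g2-difference set of size ℓ. Then the set B = {qa + c : a ∈ A, c ∈ C̄}, where C̄ ⊆ {1,...,q} is the set of representatives of C, is a g1·g2-difference set for [qN] of size kℓ. -/

import Mathlib

private def zrep (q : ℕ) (x : ZMod q) : ℤ := if x = 0 then (q : ℤ) else (x.val : ℤ)

private lemma zrep_bounds (q : ℕ) (hq : 0 < q) (x : ZMod q) :
    1 ≤ zrep q x ∧ zrep q x ≤ q := by
  haveI : NeZero q := ⟨hq.ne'⟩
  unfold zrep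
  split_ifs with h
  · omega
  · have h1 : x.val < q := ZMod.val_lt x
    have h2 : x.val ≠ 0 := fun h0 => h (by rwa [ZMod.val_eq_zero] at h0)
    omega

private lemma zrep_cast (q : ℕ) (hq : 0 < q) (x : ZMod q) :
    ((zrep q x : ℤ) : ZMod q) = x := by
  haveI : NeZero q := ⟨hq.ne'⟩
  unfold zrep
  split_ifs with h
  · subst h; push_cast; exact ZMod.natCast_self q
  · push_cast
    exact ZMod.natCast_rightInverse x

private lemma zrep_injective (q : ℕ) (hq : 0 < q) : Function.Injective (zrep q) := by
  intro x y hxy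
  have hx := zrep_cast q hq x
  rw [hxy, zrep_cast q hq y] at hx
  exact hx.symm

private lemma cast_inj_Icc (q : ℕ) (hq : 0 < q) {c c' : ℤ}
    (h1 : 1 ≤ c) (h2 : c ≤ q) (h3 : 1 ≤ c') (h4 : c' ≤ q)
    (h : (c : ZMod q) = (c' : ZMod q)) : c = c' := by
  have hd : (q:ℤ) ∣ c - c' := by
    have h0 : ((c - c' : ℤ) : ZMod q) = 0 := by push_cast; rw [h]; ring
    exact (ZMod.intCast_zmod_eq_zero_iff_dvd _ q).mp h0
  have := Int.eq_zero_of_abs_lt_dvd hd (by rw [abs_lt]; omega)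
  omega

private lemma split_eq (q : ℕ) (hq : 0 < q) {a a' c c' : ℤ}
    (h1 : 1 ≤ c) (h2 : c ≤ q) (h3 : 1 ≤ c') (h4 : c' ≤ q)
    (h : (q:ℤ) * a + c = (q:ℤ) * a' + c') : a = a' ∧ c = c' := by
  have hd : (q:ℤ) ∣ c - c' := ⟨a' - a, by rw [mul_sub]; linarith⟩
  have hcc : c = c' := by
    have := Int.eq_zero_of_abs_lt_dvd hd (by rw [abs_lt]; omega)
    omega
  refine ⟨?_, hcc⟩
  have hq' : (q:ℤ) ≠ 0 := by exact_mod_cast hq.ne'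
  exact mul_left_cancel₀ hq' (by linarith)

theorem stmt8 (q N g₁ g₂ k ℓ : ℕ) (hq : 0 < q)
    (A : Finset ℤ) (C : Finset (ZMod q))
    (hA : ∀ m : ℤ, 1 ≤ m → m ≤ (N : ℤ) →
      g₁ ≤ ((A ×ˢ A).filter (fun p => p.1 - p.2 = m)).card)
    (hC : ∀ x : ZMod q, g₂ ≤ ((C ×ˢ C).filter (fun p => p.1 - p.2 = x)).card)
    (hk : A.card = k) (hl : C.card = ℓ)
    (Cbar : Finset ℤ) (hCbar : Cbar = (Finset.Icc (1 : ℤ) q).filter (fun c : ℤ => ((c : ZMod q) ∈ C)))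
    (B : Finset ℤ) (hB : B = (A ×ˢ Cbar).image (fun p : ℤ × ℤ => (q : ℤ) * p.1 + p.2)) :
    (∀ m : ℤ, 1 ≤ m → m ≤ (q * N : ℤ) →
      g₁ * g₂ ≤ ((B ×ˢ B).filter (fun p => p.1 - p.2 = m)).card) ∧
    B.card = k * ℓ := by
  haveI : NeZero q := ⟨hq.ne'⟩
  have hq' : (0:ℤ) < q := by exact_mod_cast hq
  have hCbar_mem : ∀ c ∈ Cbar, 1 ≤ c ∧ c ≤ (q:ℤ) ∧ ((c : ZMod q) ∈ C) := by
    intro c hc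
    rw [hCbar, Finset.mem_filter, Finset.mem_Icc] at hc
    exact ⟨hc.1.1, hc.1.2, hc.2⟩
  -- Cbar is the image of C under zrep
  have hCbar_eq : Cbar = C.image (zrep q) := by
    ext c
    rw [hCbar, Finset.mem_filter, Finset.mem_Icc, Finset.mem_image]
    constructor
    · rintro ⟨⟨hc1, hc2⟩, hcC⟩
      exact ⟨(c : ZMod q), hcC,
        cast_inj_Icc q hq (zrep_bounds q hq _).1 (zrep_bounds q hq _).2 hc1 hc2
          (by rw [zrep_cast q hq])⟩
    · rintro ⟨x, hx, rfl⟩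
      exact ⟨⟨(zrep_bounds q hq x).1, (zrep_bounds q hq x).2⟩,
        by rw [zrep_cast q hq]; exact hx⟩
  have hCbar_card : Cbar.card = ℓ := by
    rw [hCbar_eq, Finset.card_image_of_injOn (zrep_injective q hq).injOn, hl]
  -- injectivity of the blow-up map on A ×ˢ Cbar
  have hBinj : Set.InjOn (fun p : ℤ × ℤ => (q:ℤ) * p.1 + p.2) (A ×ˢ Cbar : Finset (ℤ×ℤ)) := by
    intro p hp p' hp' hpp
    simp only [Finset.coe_product, Set.mem_prod, Finset.mem_coe] at hp hp'
    obtain ⟨h1, h2, _⟩ := hCbar_mem _ hp.2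
    obtain ⟨h1', h2', _⟩ := hCbar_mem _ hp'.2
    have := split_eq q hq h1 h2 h1' h2' hpp
    exact Prod.ext this.1 this.2
  have hBcard : B.card = k * ℓ := by
    rw [hB, Finset.card_image_of_injOn hBinj, Finset.card_product, hk, hCbar_card]
  refine ⟨?_, hBcard⟩
  intro m hm1 hm2
  have hN1 : 1 ≤ N := by
    rcases Nat.eq_zero_or_pos N with h | h
    · subst h; simp at hm2; omega
    · exact h
  -- g₁ ≤ |A|
  have hA0 : g₁ ≤ A.card := by
    calc g₁ ≤ ((A ×ˢ A).filter (fun p => p.1 - p.2 = 1)).card :=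
          hA 1 le_rfl (by exact_mod_cast hN1)
    _ ≤ A.card := by
        apply Finset.card_le_card_of_injOn (fun p => p.1)
        · intro p hp
          rw [Finset.mem_coe, Finset.mem_filter, Finset.mem_product] at hp
          exact hp.1.1
        · intro p hp p' hp' h
          simp only [Finset.mem_coe, Finset.mem_filter] at hp hp'
          have h1 : p.1 = p'.1 := h
          have e1 : p.1 - p.2 = 1 := hp.2
          have e2 : p'.1 - p'.2 = 1 := hp'.2
          have h2 : p.2 = p'.2 := by omega
          exact Prod.ext h1 h2
  -- uniform A bound, including difference 0
  have hA' : ∀ s : ℤ, 0 ≤ s → s ≤ (N:ℤ) →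
      g₁ ≤ ((A ×ˢ A).filter (fun p => p.1 - p.2 = s)).card := by
    intro s hs0 hsN
    rcases eq_or_lt_of_le hs0 with h | h
    · calc g₁ ≤ A.card := hA0
      _ = (A.image (fun a => (a, a))).card :=
          (Finset.card_image_of_injective _ (fun a b hab => (Prod.mk.injEq _ _ _ _ ▸ hab).1)).symm
      _ ≤ _ := by
          apply Finset.card_le_card
          intro p hp
          rw [Finset.mem_image] at hp
          obtain ⟨a, ha, rfl⟩ := hp
          rw [Finset.mem_filter, Finset.mem_product]
          exact ⟨⟨ha, ha⟩, by omega⟩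
    · exact hA s h hsN
  -- the set of lifted pairs with the right residue
  set S := (Cbar ×ˢ Cbar).filter
      (fun p : ℤ × ℤ => ((p.1 - p.2 : ℤ) : ZMod q) = (m : ZMod q)) with hS
  have hScard : g₂ ≤ S.card := by
    calc g₂ ≤ ((C ×ˢ C).filter (fun p => p.1 - p.2 = (m : ZMod q))).card := hC _
    _ ≤ S.card := by
        apply Finset.card_le_card_of_injOn (fun p => (zrep q p.1, zrep q p.2))
        · intro p hp
          rw [Finset.mem_coe, Finset.mem_filter, Finset.mem_product] at hp
          rw [Finset.mem_coe, hS, Finset.mem_filter, Finset.mem_product]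
          refine ⟨⟨?_, ?_⟩, ?_⟩
          · rw [hCbar, Finset.mem_filter, Finset.mem_Icc]
            exact ⟨⟨(zrep_bounds q hq _).1, (zrep_bounds q hq _).2⟩,
              by rw [zrep_cast q hq]; exact hp.1.1⟩
          · rw [hCbar, Finset.mem_filter, Finset.mem_Icc]
            exact ⟨⟨(zrep_bounds q hq _).1, (zrep_bounds q hq _).2⟩,
              by rw [zrep_cast q hq]; exact hp.1.2⟩
          · push_cast
            rw [zrep_cast q hq, zrep_cast q hq]
            exact hp.2
        · intro p _ p' _ h
          have h1 : zrep q p.1 = zrep q p'.1 := congrArg Prod.fst h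
          have h2 : zrep q p.2 = zrep q p'.2 := congrArg Prod.snd h
          exact Prod.ext (zrep_injective q hq h1) (zrep_injective q hq h2)
  -- key facts for elements of S
  have hSkey : ∀ p ∈ S, (q:ℤ) * ((m - (p.1 - p.2)) / q) = m - (p.1 - p.2) ∧
      0 ≤ (m - (p.1 - p.2)) / q ∧ (m - (p.1 - p.2)) / q ≤ (N:ℤ) := by
    intro p hp
    rw [hS, Finset.mem_filter, Finset.mem_product] at hp
    obtain ⟨⟨hp1, hp2⟩, hpr⟩ := hp
    obtain ⟨hb1, hb2, _⟩ := hCbar_mem _ hp1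
    obtain ⟨hb3, hb4, _⟩ := hCbar_mem _ hp2
    have hd : (q:ℤ) ∣ m - (p.1 - p.2) := by
      have h0 : ((m - (p.1 - p.2) : ℤ) : ZMod q) = 0 := by
        push_cast at hpr ⊢
        rw [hpr]
        ring
      exact (ZMod.intCast_zmod_eq_zero_iff_dvd _ q).mp h0
    have hmul : (q:ℤ) * ((m - (p.1 - p.2)) / q) = m - (p.1 - p.2) :=
      Int.mul_ediv_cancel' hd
    refine ⟨hmul, ?_, ?_⟩
    · have hgt : (q:ℤ) * (-1) < (q:ℤ) * ((m - (p.1 - p.2)) / q) := by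
        rw [hmul]; linarith
      have := (mul_lt_mul_iff_right₀ hq').mp hgt
      omega
    · have hmn : (m : ℤ) ≤ (q:ℤ) * (N:ℤ) := by push_cast at hm2; linarith
      have hlt : (q:ℤ) * ((m - (p.1 - p.2)) / q) < (q:ℤ) * ((N:ℤ) + 1) := by
        rw [hmul, mul_add]
        linarith
      have := (mul_lt_mul_iff_right₀ hq').mp hlt
      omega
  set T : ℤ × ℤ → Finset (ℤ × ℤ) := fun p =>
      (A ×ˢ A).filter (fun a => a.1 - a.2 = (m - (p.1 - p.2)) / q) with hT
  have hcount : g₁ * g₂ ≤ (S.sigma T).card := by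
    rw [Finset.card_sigma]
    calc g₁ * g₂ ≤ g₁ * S.card := Nat.mul_le_mul_left _ hScard
    _ = ∑ _p ∈ S, g₁ := by rw [Finset.sum_const, smul_eq_mul, mul_comm]
    _ ≤ ∑ p ∈ S, (T p).card :=
        Finset.sum_le_sum fun p hp => hA' _ (hSkey p hp).2.1 (hSkey p hp).2.2
  refine le_trans hcount ?_
  apply Finset.card_le_card_of_injOn
    (fun z => ((q:ℤ) * z.2.1 + z.1.1, (q:ℤ) * z.2.2 + z.1.2))
  · intro z hz
    rw [Finset.mem_coe, Finset.mem_sigma] at hz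
    obtain ⟨hz1, hz2⟩ := hz
    rw [hT, Finset.mem_filter, Finset.mem_product] at hz2
    have key := hSkey _ hz1
    rw [hS, Finset.mem_filter, Finset.mem_product] at hz1
    rw [Finset.mem_coe, Finset.mem_filter, Finset.mem_product]
    refine ⟨⟨?_, ?_⟩, ?_⟩
    · rw [hB]
      exact Finset.mem_image.mpr ⟨(z.2.1, z.1.1),
        Finset.mem_product.mpr ⟨hz2.1.1, hz1.1.1⟩, rfl⟩
    · rw [hB]
      exact Finset.mem_image.mpr ⟨(z.2.2, z.1.2),
        Finset.mem_product.mpr ⟨hz2.1.2, hz1.1.2⟩, rfl⟩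
    · have hdiff : (q:ℤ) * (z.2.1 - z.2.2) = m - (z.1.1 - z.1.2) := by
        rw [hz2.2]
        exact key.1
      have := mul_sub (q:ℤ) z.2.1 z.2.2
      show (q:ℤ) * z.2.1 + z.1.1 - ((q:ℤ) * z.2.2 + z.1.2) = m
      linarith
  · rintro ⟨⟨c1, c2⟩, a1, a2⟩ hz ⟨⟨c1', c2'⟩, a1', a2'⟩ hz' h
    simp only [Finset.mem_coe, Finset.mem_sigma] at hz hz'
    have hz1 := hz.1
    have hz1' := hz'.1
    rw [hS, Finset.mem_filter, Finset.mem_product] at hz1 hz1'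
    obtain ⟨hb1, hb2, _⟩ := hCbar_mem _ hz1.1.1
    obtain ⟨hb3, hb4, _⟩ := hCbar_mem _ hz1.1.2
    obtain ⟨hb1', hb2', _⟩ := hCbar_mem _ hz1'.1.1
    obtain ⟨hb3', hb4', _⟩ := hCbar_mem _ hz1'.1.2
    have h1 : (q:ℤ) * a1 + c1 = (q:ℤ) * a1' + c1' := congrArg Prod.fst h
    have h2 : (q:ℤ) * a2 + c2 = (q:ℤ) * a2' + c2' := congrArg Prod.snd h
    obtain ⟨ha1, hc1⟩ := split_eq q hq hb1 hb2 hb1' hb2' h1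
    obtain ⟨ha2, hc2⟩ := split_eq q hq hb3 hb4 hb3' hb4' h2
    subst ha1; subst hc1; subst ha2; subst hc2
    rfl
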